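/- Let P be a non-trivial product distribution on {0,1}^n, and for each ℓ let P_ℓ denote the distribution of z ∼ P conditioned on |z| = ℓ. Then there exists a probability distribution on maximal chains ∅ = c_0 ⊂ c_1 ⊂ ... ⊂ c_n = [n] of subsets of [n] such that for every ℓ ∈ {0,1,...,n}, the random set c_ℓ is distributed according to P_ℓ. -/

import Mathlib

open Finset

namespace ChainDist

variable (n : ℕ) (p : Fin n → ℝ)

noncomputable def rr (j : Fin n) : ℝ := p j / (1 - p j)

def SS (k : ℕ) : Finset (Fin n) := univ.filter (fun j => (j : ℕ) < k)

noncomputable def EE (k ℓ : ℕ) : ℝ := ∑ t ∈ (SS n k).powersetCard ℓ, ∏ j ∈ t, rr n p j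

noncomputable def GG (k ℓ : ℕ) : ℝ := EE n p k ℓ / EE n p (k + 1) ℓ

noncomputable def rho (k m : ℕ) : ℝ := GG n p k m - GG n p k (m + 1)

variable {n p}

lemma rr_pos (hp : ∀ j, 0 < p j ∧ p j < 1) (j : Fin n) : 0 < rr n p j :=
  div_pos (hp j).1 (by linarith [(hp j).2])

lemma mem_SS {k : ℕ} {j : Fin n} : j ∈ SS n k ↔ (j : ℕ) < k := by simp [SS]

lemma SS_zero : SS n 0 = ∅ := by ext j; simp [mem_SS]

lemma SS_succ {k : ℕ} (hk : k < n) : SS n (k + 1) = insert ⟨k, hk⟩ (SS n k) := by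
  ext j
  simp only [mem_SS, mem_insert, Fin.ext_iff]
  omega

lemma not_mem_SS {k : ℕ} (hk : k < n) : (⟨k, hk⟩ : Fin n) ∉ SS n k := by
  simp [mem_SS]

lemma card_SS {k : ℕ} (hk : k ≤ n) : (SS n k).card = k := by
  induction k with
  | zero => simp [SS_zero]
  | succ k ih =>
    rw [SS_succ hk, card_insert_of_notMem (not_mem_SS hk), ih (by omega)]

lemma SS_n : SS n n = univ := by ext j; simp [mem_SS, j.isLt]

lemma SS_mono {k k' : ℕ} (h : k ≤ k') : SS n k ⊆ SS n k' := fun j hj => by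
  rw [mem_SS] at *; omega

lemma EE_zero (k : ℕ) : EE n p k 0 = 1 := by
  simp [EE, powersetCard_zero]

lemma EE_of_lt {k ℓ : ℕ} (hk : k ≤ n) (h : k < ℓ) : EE n p k ℓ = 0 := by
  rw [EE, powersetCard_eq_empty.2 (by rw [card_SS hk]; omega), sum_empty]

lemma EE_nonneg (hp : ∀ j, 0 < p j ∧ p j < 1) (k ℓ : ℕ) : 0 ≤ EE n p k ℓ :=
  sum_nonneg fun t _ => prod_nonneg fun j _ => (rr_pos hp j).le

lemma EE_pos (hp : ∀ j, 0 < p j ∧ p j < 1) {k ℓ : ℕ} (hℓ : ℓ ≤ k) (hk : k ≤ n) :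
    0 < EE n p k ℓ := by
  refine sum_pos (fun t _ => prod_pos fun j _ => rr_pos hp j) ?_
  exact powersetCard_nonempty.2 (by rw [card_SS hk]; omega)

lemma EE_succ {k : ℕ} (hk : k < n) (ℓ : ℕ) :
    EE n p (k + 1) (ℓ + 1) = EE n p k (ℓ + 1) + rr n p ⟨k, hk⟩ * EE n p k ℓ := by
  classical
  rw [EE, SS_succ hk, powersetCard_succ_insert (not_mem_SS hk), sum_union, sum_image]
  · congr 1
    rw [EE, mul_sum]
    refine sum_congr rfl fun t ht => ?_
    rw [mem_powersetCard] at ht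
    rw [prod_insert (fun h => not_mem_SS hk (ht.1 h))]
  · intro t ht t' ht' h
    rw [mem_coe, mem_powersetCard] at ht ht'
    have : ∀ u : Finset (Fin n), u ⊆ SS n k → (insert (⟨k, hk⟩ : Fin n) u).erase ⟨k, hk⟩ = u := by
      intro u hu
      rw [erase_insert (fun h => not_mem_SS hk (hu h))]
    rw [← this t ht.1, ← this t' ht'.1, h]
  · rw [disjoint_left]
    intro t ht ht'
    rw [mem_powersetCard] at ht
    rw [mem_image] at ht'
    obtain ⟨u, hu, rfl⟩ := ht'
    exact not_mem_SS hk (ht.1 (mem_insert_self _ _))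


lemma EE_lc (hp : ∀ j, 0 < p j ∧ p j < 1) :
    ∀ k, k ≤ n → ∀ a b : ℕ, a ≤ b →
      EE n p k a * EE n p k (b + 2) ≤ EE n p k (a + 1) * EE n p k (b + 1) := by
  intro k
  induction k with
  | zero =>
    intro hk a b hab
    rw [EE_of_lt hk (by omega : 0 < b + 2), mul_zero]
    exact mul_nonneg (EE_nonneg hp _ _) (EE_nonneg hp _ _)
  | succ k ih =>
    intro hk a b hab
    have hk' : k < n := by omega
    have ihk := ih (by omega)
    have hr : (0:ℝ) < rr n p ⟨k, hk'⟩ := rr_pos hp _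
    have hEn : ∀ x : ℕ, 0 ≤ EE n p k x := EE_nonneg hp k
    cases a with
    | zero =>
      rw [EE_zero, EE_succ hk', EE_succ hk', EE_succ hk', EE_zero]
      have h1 := ihk 0 b (by omega)
      rw [EE_zero] at h1
      nlinarith [mul_nonneg hr.le (hEn b), mul_nonneg hr.le (hEn (b+1)),
        mul_nonneg (mul_nonneg hr.le hr.le) (hEn b), hEn 1, hEn (b+1)]
    | succ a2 =>
      have hb : a2 + 1 ≤ b := hab
      obtain ⟨b3, rfl⟩ : ∃ b3, b = b3 + 1 := ⟨b - 1, by omega⟩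
      rw [EE_succ hk', EE_succ hk', EE_succ hk', EE_succ hk']
      have h1 := ihk (a2+1) (b3+1) (by omega)
      have h3 := ihk a2 b3 (by omega)
      have h2 : EE n p k a2 * EE n p k (b3 + 3) ≤ EE n p k (a2 + 2) * EE n p k (b3 + 1) := by
        rcases Nat.eq_or_lt_of_le hb with heq | hlt
        · have hba : b3 = a2 := by omega
          subst hba
          have h := ihk b3 (b3+1) (by omega)
          nlinarith [h]
        · have hb2 : a2 + 1 ≤ b3 := by omega
          have hA := ihk (a2+1) b3 hb2
          have hB := ihk a2 (b3+1) (by omega)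
          calc EE n p k a2 * EE n p k (b3 + 3) ≤ EE n p k (a2+1) * EE n p k (b3 + 2) := hB
            _ ≤ EE n p k (a2+2) * EE n p k (b3+1) := hA
      nlinarith [mul_le_mul_of_nonneg_left h2 hr.le,
        mul_le_mul_of_nonneg_left h3 (mul_nonneg hr.le hr.le), h1,
        mul_nonneg hr.le (hEn (b3+1)), mul_nonneg hr.le (hEn (a2+1))]

lemma GG_zero (k : ℕ) : GG n p k 0 = 1 := by
  rw [GG, EE_zero, EE_zero]; norm_num

lemma GG_top (hp : ∀ j, 0 < p j ∧ p j < 1) {k : ℕ} (hk : k < n) : GG n p k (k + 1) = 0 := by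
  rw [GG, EE_of_lt (by omega) (by omega), zero_div]

lemma GG_succ_le (hp : ∀ j, 0 < p j ∧ p j < 1) {k m : ℕ} (hk : k + 1 ≤ n) (hm : m ≤ k) :
    GG n p k (m + 1) ≤ GG n p k m := by
  have hk' : k < n := by omega
  have d1 : 0 < EE n p (k+1) (m+1) := EE_pos hp (by omega) (by omega)
  have d0 : 0 < EE n p (k+1) m := EE_pos hp (by omega) (by omega)
  rw [GG, GG, div_le_div_iff₀ d1 d0]
  have hr : (0:ℝ) < rr n p ⟨k, hk'⟩ := rr_pos hp _
  have hEn : ∀ x : ℕ, 0 ≤ EE n p k x := EE_nonneg hp k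
  match m with
  | 0 =>
    rw [EE_zero, EE_zero, EE_succ hk', EE_zero]
    nlinarith [hEn 1]
  | (m2+1) =>
    rw [EE_succ hk', EE_succ hk']
    have hlc := EE_lc hp k (by omega) m2 m2 le_rfl
    nlinarith [mul_le_mul_of_nonneg_left hlc hr.le]

lemma rho_nonneg (hp : ∀ j, 0 < p j ∧ p j < 1) {k m : ℕ} (hk : k + 1 ≤ n) (hm : m ≤ k) :
    0 ≤ rho n p k m :=
  sub_nonneg.2 (GG_succ_le hp hk hm)

lemma rho_sum (k ℓ : ℕ) : ∑ m ∈ range ℓ, rho n p k m = GG n p k 0 - GG n p k ℓ :=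
  Finset.sum_range_sub' (GG n p k) ℓ


variable (n p)

noncomputable def ins (k : ℕ) (hk : k < n) (c : Fin (k + 1) → Finset (Fin n)) (m : ℕ) :
    Fin (k + 2) → Finset (Fin n) :=
  fun ℓ => if (ℓ : ℕ) ≤ m then c ⟨min (ℓ : ℕ) k, by omega⟩
    else insert ⟨k, hk⟩ (c ⟨(ℓ : ℕ) - 1, by have := ℓ.isLt; omega⟩)

noncomputable def mu : (k : ℕ) → (Fin (k + 1) → Finset (Fin n)) → ℝ
  | 0, c => if c = fun _ => ∅ then 1 else 0
  | (k + 1), c =>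
    if hk : k < n then
      ∑ m ∈ range (k + 1), ∑ c' : Fin (k + 1) → Finset (Fin n),
        (if c = ins n k hk c' m then rho n p k m * mu k c' else 0)
    else 0

def Good (k : ℕ) (c : Fin (k + 1) → Finset (Fin n)) : Prop :=
  (∀ ℓ : Fin (k + 1), (c ℓ).card = (ℓ : ℕ) ∧ c ℓ ⊆ SS n k) ∧
  (∀ ℓ : ℕ, (h : ℓ < k) → c ⟨ℓ, by omega⟩ ⊆ c ⟨ℓ + 1, by omega⟩)

variable {n p}


lemma ins_apply_le {k m : ℕ} (hk : k < n) (c : Fin (k + 1) → Finset (Fin n))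
    (ℓ : Fin (k + 2)) (hlm : (ℓ : ℕ) ≤ m) (hm : m ≤ k) :
    ins n k hk c m ℓ = c ⟨(ℓ : ℕ), by omega⟩ := by
  rw [ins, if_pos hlm]
  congr 1
  apply Fin.ext
  simp only []
  omega

lemma ins_apply_gt {k m : ℕ} (hk : k < n) (c : Fin (k + 1) → Finset (Fin n))
    (ℓ : Fin (k + 2)) (hlm : m < (ℓ : ℕ)) :
    ins n k hk c m ℓ = insert ⟨k, hk⟩ (c ⟨(ℓ : ℕ) - 1, by have := ℓ.isLt; omega⟩) := by
  rw [ins, if_neg (by omega)]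

lemma ins_apply_le' {k m ℓ : ℕ} (hk : k < n) (c : Fin (k + 1) → Finset (Fin n))
    (hℓ : ℓ < k + 2) (hlm : ℓ ≤ m) (hm : m ≤ k) :
    ins n k hk c m ⟨ℓ, hℓ⟩ = c ⟨ℓ, by omega⟩ :=
  ins_apply_le hk c ⟨ℓ, hℓ⟩ hlm hm

lemma ins_apply_gt' {k m ℓ : ℕ} (hk : k < n) (c : Fin (k + 1) → Finset (Fin n))
    (hℓ : ℓ < k + 2) (hlm : m < ℓ) :
    ins n k hk c m ⟨ℓ, hℓ⟩ = insert ⟨k, hk⟩ (c ⟨ℓ - 1, by omega⟩) :=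
  ins_apply_gt hk c ⟨ℓ, hℓ⟩ hlm

lemma good_ins {k m : ℕ} (hk : k < n) {c : Fin (k + 1) → Finset (Fin n)}
    (hc : Good n k c) (hm : m ≤ k) : Good n (k + 1) (ins n k hk c m) := by
  obtain ⟨h1, h2⟩ := hc
  constructor
  · intro ℓ
    by_cases hcase : (ℓ : ℕ) ≤ m
    · rw [ins_apply_le hk c ℓ hcase hm]
      exact ⟨(h1 _).1, (h1 _).2.trans (SS_mono (Nat.le_succ k))⟩
    · push_neg at hcase
      rw [ins_apply_gt hk c ℓ hcase]
      have hnot : (⟨k, hk⟩ : Fin n) ∉ c ⟨(ℓ : ℕ) - 1, by have := ℓ.isLt; omega⟩ :=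
        fun h => not_mem_SS hk ((h1 _).2 h)
      constructor
      · rw [card_insert_of_notMem hnot, (h1 _).1]
        simp only []
        omega
      · rw [SS_succ hk]
        exact insert_subset_insert _ (h1 _).2
  · intro ℓ hℓ
    by_cases hc1 : ℓ + 1 ≤ m
    · rw [ins_apply_le' hk c (by omega) (by omega : ℓ ≤ m) hm,
        ins_apply_le' hk c (by omega) hc1 hm]
      exact h2 ℓ (by omega)
    · by_cases hc2 : ℓ ≤ m
      · rw [ins_apply_le' hk c (by omega) hc2 hm,
          ins_apply_gt' hk c (by omega) (by omega : m < ℓ + 1)]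
        simp only [Nat.add_sub_cancel]
        exact subset_insert _ _
      · push_neg at hc2
        rw [ins_apply_gt' hk c (by omega) hc2,
          ins_apply_gt' hk c (by omega) (by omega : m < ℓ + 1)]
        simp only [Nat.add_sub_cancel]
        apply insert_subset_insert
        have h3 := h2 (ℓ - 1) (by omega)
        have heq : ℓ - 1 + 1 = ℓ := by omega
        simp only [heq] at h3
        exact h3

lemma mu_nonneg (hp : ∀ j, 0 < p j ∧ p j < 1) :
    ∀ k, k ≤ n → ∀ c, 0 ≤ mu n p k c := by
  intro k
  induction k with
  | zero =>
    intro _ c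
    rw [mu]
    split <;> norm_num
  | succ k ih =>
    intro hk c
    rw [mu, dif_pos (by omega : k < n)]
    refine sum_nonneg fun m hm => sum_nonneg fun c' _ => ?_
    split
    · exact mul_nonneg (rho_nonneg hp hk (by simpa using Nat.lt_succ_iff.1 (mem_range.1 hm)))
        (ih (by omega) c')
    · exact le_refl 0

lemma mu_sum (hp : ∀ j, 0 < p j ∧ p j < 1) :
    ∀ k, k ≤ n → ∑ c : Fin (k + 1) → Finset (Fin n), mu n p k c = 1 := by
  intro k
  induction k with
  | zero =>
    intro _
    simp only [mu]
    rw [Finset.sum_ite_eq' univ (fun _ => (∅ : Finset (Fin n))) (fun _ => (1:ℝ)),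
      if_pos (mem_univ _)]
  | succ k ih =>
    intro hk
    have hk' : k < n := by omega
    calc ∑ c : Fin (k + 2) → Finset (Fin n), mu n p (k + 1) c
        = ∑ c : Fin (k + 2) → Finset (Fin n), ∑ m ∈ range (k + 1),
            ∑ c' : Fin (k + 1) → Finset (Fin n),
            (if c = ins n k hk' c' m then rho n p k m * mu n p k c' else 0) := by
          refine sum_congr rfl fun c _ => ?_
          rw [mu, dif_pos hk']
      _ = ∑ m ∈ range (k + 1), ∑ c' : Fin (k + 1) → Finset (Fin n),
            ∑ c : Fin (k + 2) → Finset (Fin n),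
            (if c = ins n k hk' c' m then rho n p k m * mu n p k c' else 0) := by
          rw [Finset.sum_comm]
          exact sum_congr rfl fun m _ => Finset.sum_comm
      _ = ∑ m ∈ range (k + 1), ∑ c' : Fin (k + 1) → Finset (Fin n),
            rho n p k m * mu n p k c' := by
          refine sum_congr rfl fun m _ => sum_congr rfl fun c' _ => ?_
          rw [Finset.sum_ite_eq' univ (ins n k hk' c' m)
            (fun _ => rho n p k m * mu n p k c'), if_pos (mem_univ _)]
      _ = ∑ m ∈ range (k + 1), rho n p k m := by
          refine sum_congr rfl fun m _ => ?_
          rw [← Finset.mul_sum, ih (by omega), mul_one]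
      _ = 1 := by
          rw [rho_sum, GG_zero, GG_top hp hk']
          ring

lemma mu_good (hp : ∀ j, 0 < p j ∧ p j < 1) :
    ∀ k, k ≤ n → ∀ c, mu n p k c ≠ 0 → Good n k c := by
  intro k
  induction k with
  | zero =>
    intro _ c h
    rw [mu] at h
    by_cases hc : c = fun _ => ∅
    · subst hc
      refine ⟨fun ℓ => ⟨?_, ?_⟩, fun ℓ hℓ => by omega⟩
      · have := ℓ.isLt
        simp only [card_empty]
        omega
      · exact empty_subset _
    · rw [if_neg hc] at h
      exact absurd rfl h
  | succ k ih =>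
    intro hk c h
    have hk' : k < n := by omega
    rw [mu, dif_pos hk'] at h
    obtain ⟨m, hm, h2⟩ := Finset.exists_ne_zero_of_sum_ne_zero h
    obtain ⟨c', -, h3⟩ := Finset.exists_ne_zero_of_sum_ne_zero h2
    split_ifs at h3 with hceq
    · rw [hceq]
      exact good_ins hk' (ih (by omega) c' (right_ne_zero_of_mul h3))
        (by simpa using Nat.lt_succ_iff.1 (mem_range.1 hm))
    · exact absurd rfl h3


lemma sum_collapse {α : Type*} [Fintype α] [DecidableEq α] (X : α) (P : α → Prop)
    [DecidablePred P] (v : ℝ) :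
    ∑ c : α, (if P c then (if c = X then v else 0) else 0) = if P X then v else 0 := by
  calc ∑ c : α, (if P c then (if c = X then v else 0) else 0)
      = ∑ c : α, (if c = X then (if P X then v else 0) else 0) := by
        refine sum_congr rfl fun c _ => ?_
        by_cases hc : c = X
        · subst hc; simp
        · rw [if_neg hc]
          by_cases h2 : P c
          · rw [if_pos h2, if_neg hc]
          · rw [if_neg h2, if_neg hc]
    _ = if P X then v else 0 := by
        rw [Finset.sum_ite_eq' univ X (fun _ => if P X then v else 0), if_pos (mem_univ _)]

lemma mu_marginal (hp : ∀ j, 0 < p j ∧ p j < 1) :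
    ∀ k, k ≤ n → ∀ ℓ : ℕ, ∀ hℓ : ℓ ≤ k, ∀ s : Finset (Fin n), s ⊆ SS n k → s.card = ℓ →
      ∑ c ∈ univ.filter (fun c : Fin (k + 1) → Finset (Fin n) => c ⟨ℓ, by omega⟩ = s),
        mu n p k c = (∏ j ∈ s, rr n p j) / EE n p k ℓ := by
  intro k
  induction k with
  | zero =>
    intro _ ℓ hℓ s hs hcard
    have hl0 : ℓ = 0 := by omega
    subst hl0
    have hs0 : s = ∅ := subset_empty.1 (by rwa [SS_zero] at hs)
    subst hs0
    rw [sum_filter, EE_zero, prod_empty]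
    have hterm : ∀ c : Fin 1 → Finset (Fin n),
        (if c ⟨0, by omega⟩ = ∅ then mu n p 0 c else 0) =
          (if c = fun _ => ∅ then 1 else 0) := by
      intro c
      by_cases hc : c = fun _ => ∅
      · subst hc
        rw [if_pos rfl, if_pos rfl]
        simp [mu]
      · have hne : c ⟨0, by omega⟩ ≠ ∅ := fun h => hc (funext fun x => by
          have hx : x = ⟨0, by omega⟩ := Subsingleton.elim _ _
          rw [hx, h])
        rw [if_neg hne, if_neg hc]
    rw [sum_congr rfl fun c _ => hterm c,
      Finset.sum_ite_eq' univ (fun _ => (∅ : Finset (Fin n))) (fun _ => (1:ℝ)),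
      if_pos (mem_univ _)]
    norm_num
  | succ k ih =>
    intro hk ℓ hℓ s hs hcard
    have hk' : k < n := by omega
    have step1 : ∑ c ∈ univ.filter
          (fun c : Fin (k + 2) → Finset (Fin n) => c ⟨ℓ, by omega⟩ = s), mu n p (k + 1) c
        = ∑ m ∈ range (k + 1), ∑ c' : Fin (k + 1) → Finset (Fin n),
            (if ins n k hk' c' m ⟨ℓ, by omega⟩ = s then rho n p k m * mu n p k c' else 0) := by
      rw [sum_filter]
      calc ∑ c : Fin (k + 2) → Finset (Fin n), (if c ⟨ℓ, by omega⟩ = s then mu n p (k+1) c else 0)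
          = ∑ c : Fin (k + 2) → Finset (Fin n), ∑ m ∈ range (k + 1),
              ∑ c' : Fin (k + 1) → Finset (Fin n),
              (if c ⟨ℓ, by omega⟩ = s then
                (if c = ins n k hk' c' m then rho n p k m * mu n p k c' else 0) else 0) := by
            refine sum_congr rfl fun c _ => ?_
            by_cases hc : c ⟨ℓ, by omega⟩ = s
            · rw [if_pos hc, mu, dif_pos hk']
              exact sum_congr rfl fun m _ => sum_congr rfl fun c' _ => (if_pos hc).symm
            · rw [if_neg hc]
              symm
              refine sum_eq_zero fun m _ => sum_eq_zero fun c' _ => if_neg hc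
        _ = ∑ m ∈ range (k + 1), ∑ c' : Fin (k + 1) → Finset (Fin n),
              ∑ c : Fin (k + 2) → Finset (Fin n),
              (if c ⟨ℓ, by omega⟩ = s then
                (if c = ins n k hk' c' m then rho n p k m * mu n p k c' else 0) else 0) := by
            rw [Finset.sum_comm]
            exact sum_congr rfl fun m _ => Finset.sum_comm
        _ = _ := by
            refine sum_congr rfl fun m _ => sum_congr rfl fun c' _ => ?_
            exact sum_collapse (ins n k hk' c' m)
              (fun c => c ⟨ℓ, by omega⟩ = s) (rho n p k m * mu n p k c')
    rw [step1]
    by_cases hks : (⟨k, hk'⟩ : Fin n) ∈ s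
    · -- k is in s
      obtain ⟨ℓ2, rfl⟩ : ∃ ℓ2, ℓ = ℓ2 + 1 := by
        refine ⟨ℓ - 1, ?_⟩
        have : 0 < ℓ := by rw [← hcard]; exact card_pos.2 ⟨_, hks⟩
        omega
      have hcard' : (s.erase ⟨k, hk'⟩).card = ℓ2 := by
        rw [card_erase_of_mem hks, hcard]
        omega
      have hs'k : s.erase ⟨k, hk'⟩ ⊆ SS n k := by
        intro j hj
        obtain ⟨hne, hjs⟩ := mem_erase.1 hj
        have hj2 := hs hjs
        rw [SS_succ hk', mem_insert] at hj2
        exact hj2.resolve_left hne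
      have hℓ2 : ℓ2 ≤ k := by omega
      rw [← Finset.sum_range_add_sum_Ico _ (show ℓ2 + 1 ≤ k + 1 by omega)]
      have hz : ∀ m ∈ Ico (ℓ2 + 1) (k + 1),
          (∑ c' : Fin (k + 1) → Finset (Fin n),
            (if ins n k hk' c' m ⟨ℓ2 + 1, by omega⟩ = s then
              rho n p k m * mu n p k c' else 0)) = 0 := by
        intro m hm
        obtain ⟨hm1, hm2⟩ := mem_Ico.1 hm
        refine sum_eq_zero fun c' _ => ?_
        rw [ins_apply_le' hk' c' (by omega) hm1 (by omega)]
        by_cases hmu : mu n p k c' = 0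
        · split_ifs with h
          · rw [hmu, mul_zero]
          · rfl
        · have hgood := mu_good hp k (by omega) c' hmu
          have hsub := (hgood.1 ⟨ℓ2 + 1, by omega⟩).2
          exact if_neg fun hcontra => not_mem_SS hk' (hsub (by rw [hcontra]; exact hks))
      rw [Finset.sum_eq_zero hz, add_zero]
      have he : ∀ m ∈ range (ℓ2 + 1),
          (∑ c' : Fin (k + 1) → Finset (Fin n),
            (if ins n k hk' c' m ⟨ℓ2 + 1, by omega⟩ = s then
              rho n p k m * mu n p k c' else 0)) =
            rho n p k m * ((∏ j ∈ s.erase ⟨k, hk'⟩, rr n p j) / EE n p k ℓ2) := by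
        intro m hm
        have hm1 : m < ℓ2 + 1 := mem_range.1 hm
        calc ∑ c' : Fin (k + 1) → Finset (Fin n),
              (if ins n k hk' c' m ⟨ℓ2 + 1, by omega⟩ = s then
                rho n p k m * mu n p k c' else 0)
            = ∑ c' : Fin (k + 1) → Finset (Fin n),
              (if c' ⟨ℓ2, by omega⟩ = s.erase ⟨k, hk'⟩ then
                rho n p k m * mu n p k c' else 0) := by
              refine sum_congr rfl fun c' _ => ?_
              rw [ins_apply_gt' hk' c' (by omega) (by omega)]
              simp only [Nat.add_sub_cancel]
              by_cases hmu : mu n p k c' = 0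
              · split_ifs <;> simp [hmu]
              · have hgood := mu_good hp k (by omega) c' hmu
                have hsub := (hgood.1 ⟨ℓ2, by omega⟩).2
                have hnotmem : (⟨k, hk'⟩ : Fin n) ∉ c' ⟨ℓ2, by omega⟩ :=
                  fun h => not_mem_SS hk' (hsub h)
                refine if_congr ?_ rfl rfl
                constructor
                · intro h
                  have h2 : (insert (⟨k, hk'⟩ : Fin n) (c' ⟨ℓ2, by omega⟩)).erase ⟨k, hk'⟩
                      = s.erase ⟨k, hk'⟩ := by rw [h]
                  rwa [erase_insert hnotmem] at h2
                · intro h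
                  rw [h]
                  exact insert_erase hks
          _ = rho n p k m * ∑ c' : Fin (k + 1) → Finset (Fin n),
                (if c' ⟨ℓ2, by omega⟩ = s.erase ⟨k, hk'⟩ then mu n p k c' else 0) := by
              rw [Finset.mul_sum]
              exact sum_congr rfl fun c' _ => by rw [mul_ite, mul_zero]
          _ = rho n p k m * ((∏ j ∈ s.erase ⟨k, hk'⟩, rr n p j) / EE n p k ℓ2) := by
              rw [← sum_filter, ih (by omega) ℓ2 hℓ2 (s.erase ⟨k, hk'⟩) hs'k hcard']
      rw [sum_congr rfl he, ← sum_mul, rho_sum, GG_zero]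
      have hw : ∏ j ∈ s, rr n p j = rr n p ⟨k, hk'⟩ * ∏ j ∈ s.erase ⟨k, hk'⟩, rr n p j :=
        (mul_prod_erase s _ hks).symm
      rw [hw, GG, EE_succ hk']
      have e2 : EE n p k ℓ2 ≠ 0 := ne_of_gt (EE_pos hp hℓ2 (by omega))
      have e3 : EE n p k (ℓ2 + 1) + rr n p ⟨k, hk'⟩ * EE n p k ℓ2 ≠ 0 := by
        have h4 := EE_pos hp (show ℓ2 + 1 ≤ k + 1 by omega) hk
        rw [EE_succ hk'] at h4
        exact ne_of_gt h4
      field_simp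
      ring
    · -- k is not in s
      have hsk : s ⊆ SS n k := by
        intro j hj
        have hj2 := hs hj
        rw [SS_succ hk', mem_insert] at hj2
        rcases hj2 with h | h
        · exact absurd (h ▸ hj) hks
        · exact h
      have hlk : ℓ ≤ k := by
        by_contra hcon
        have hl : ℓ = k + 1 := by omega
        have hseq : s = SS n (k + 1) :=
          eq_of_subset_of_card_le hs (by rw [card_SS hk, hcard, hl])
        apply hks
        rw [hseq]
        exact mem_SS.2 (Nat.lt_succ_self k)
      rw [← Finset.sum_range_add_sum_Ico _ (show ℓ ≤ k + 1 by omega)]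
      have hz : ∀ m ∈ range ℓ,
          (∑ c' : Fin (k + 1) → Finset (Fin n),
            (if ins n k hk' c' m ⟨ℓ, by omega⟩ = s then
              rho n p k m * mu n p k c' else 0)) = 0 := by
        intro m hm
        refine sum_eq_zero fun c' _ => ?_
        rw [ins_apply_gt' hk' c' (by omega) (mem_range.1 hm)]
        exact if_neg fun hcontra => hks (by rw [← hcontra]; exact mem_insert_self _ _)
      rw [Finset.sum_eq_zero hz, zero_add]
      have he : ∀ m ∈ Ico ℓ (k + 1),
          (∑ c' : Fin (k + 1) → Finset (Fin n),
            (if ins n k hk' c' m ⟨ℓ, by omega⟩ = s then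
              rho n p k m * mu n p k c' else 0)) =
            rho n p k m * ((∏ j ∈ s, rr n p j) / EE n p k ℓ) := by
        intro m hm
        obtain ⟨hm1, hm2⟩ := mem_Ico.1 hm
        calc ∑ c' : Fin (k + 1) → Finset (Fin n),
              (if ins n k hk' c' m ⟨ℓ, by omega⟩ = s then
                rho n p k m * mu n p k c' else 0)
            = ∑ c' : Fin (k + 1) → Finset (Fin n),
              (if c' ⟨ℓ, by omega⟩ = s then rho n p k m * mu n p k c' else 0) := by
              refine sum_congr rfl fun c' _ => ?_
              rw [ins_apply_le' hk' c' (by omega) hm1 (by omega)]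
          _ = rho n p k m * ∑ c' : Fin (k + 1) → Finset (Fin n),
                (if c' ⟨ℓ, by omega⟩ = s then mu n p k c' else 0) := by
              rw [Finset.mul_sum]
              exact sum_congr rfl fun c' _ => by rw [mul_ite, mul_zero]
          _ = rho n p k m * ((∏ j ∈ s, rr n p j) / EE n p k ℓ) := by
              rw [← sum_filter, ih (by omega) ℓ hlk s hsk hcard]
      rw [sum_congr rfl he, ← sum_mul]
      have hIco : ∑ m ∈ Ico ℓ (k + 1), rho n p k m = GG n p k ℓ := by
        have h0 := Finset.sum_range_add_sum_Ico (rho n p k) (show ℓ ≤ k + 1 by omega)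
        rw [rho_sum, rho_sum, GG_top hp hk'] at h0
        linarith
      rw [hIco, GG]
      have e1 : EE n p k ℓ ≠ 0 := ne_of_gt (EE_pos hp hlk (by omega))
      have e2 : EE n p (k + 1) ℓ ≠ 0 := ne_of_gt (EE_pos hp (by omega) hk)
      field_simp
  

lemma prod_ite_eq_mul (hp : ∀ j, 0 < p j ∧ p j < 1) (t : Finset (Fin n)) :
    (∏ j, if j ∈ t then p j else 1 - p j) = (∏ j ∈ t, rr n p j) * ∏ j, (1 - p j) := by
  have h1 : ∀ j : Fin n, (1:ℝ) - p j ≠ 0 := fun j => ne_of_gt (by linarith [(hp j).2])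
  calc ∏ j, (if j ∈ t then p j else 1 - p j)
      = ∏ j ∈ t ∪ tᶜ, (if j ∈ t then p j else 1 - p j) := by rw [Finset.union_compl]
    _ = (∏ j ∈ t, if j ∈ t then p j else 1 - p j) *
        ∏ j ∈ tᶜ, (if j ∈ t then p j else 1 - p j) := Finset.prod_union disjoint_compl_right
    _ = (∏ j ∈ t, p j) * ∏ j ∈ tᶜ, (1 - p j) := by
        congr 1
        · exact prod_congr rfl fun j hj => if_pos hj
        · exact prod_congr rfl fun j hj => if_neg (mem_compl.1 hj)
    _ = ((∏ j ∈ t, rr n p j) * ∏ j ∈ t, (1 - p j)) * ∏ j ∈ tᶜ, (1 - p j) := by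
        rw [← prod_mul_distrib]
        exact congrArg₂ _ (prod_congr rfl fun j _ => (div_mul_cancel₀ _ (h1 j)).symm) rfl
    _ = (∏ j ∈ t, rr n p j) * ∏ j, (1 - p j) := by
        rw [mul_assoc, ← Finset.prod_union disjoint_compl_right, Finset.union_compl]

end ChainDist

open ChainDist

/-- There is a distribution on maximal chains `∅ = c₀ ⊂ c₁ ⊂ ⋯ ⊂ cₙ = [n]`
such that `c_ℓ` is distributed according to `P` conditioned on `|z| = ℓ`. -/
theorem chain_distribution (n : ℕ) (p : Fin n → ℝ)
    (hp : ∀ j, 0 < p j ∧ p j < 1) :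
    ∃ μ : ((Fin (n + 1)) → Finset (Fin n)) → ℝ,
      (∀ c, 0 ≤ μ c) ∧
      (∑ c : (Fin (n + 1)) → Finset (Fin n), μ c = 1) ∧
      (∀ c, μ c ≠ 0 →
        (∀ ℓ : Fin (n + 1), (c ℓ).card = (ℓ : ℕ)) ∧
        (∀ ℓ : Fin n, c ℓ.castSucc ⊂ c ℓ.succ)) ∧
      (∀ ℓ : Fin (n + 1), ∀ s : Finset (Fin n), s.card = (ℓ : ℕ) →
        (∑ c ∈ (Finset.univ : Finset ((Fin (n + 1)) → Finset (Fin n))).filter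
            (fun c => c ℓ = s), μ c) =
          (∏ j, if j ∈ s then p j else 1 - p j) /
            (∑ t ∈ (Finset.univ : Finset (Fin n)).powersetCard (ℓ : ℕ),
              ∏ j, if j ∈ t then p j else 1 - p j)) := by
  refine ⟨mu n p n, mu_nonneg hp n le_rfl, mu_sum hp n le_rfl, ?_, ?_⟩
  · intro c hc
    obtain ⟨h1, h2⟩ := mu_good hp n le_rfl c hc
    refine ⟨fun ℓ => (h1 ℓ).1, fun ℓ => ?_⟩
    have hsub : c ℓ.castSucc ⊆ c ℓ.succ := h2 (ℓ : ℕ) ℓ.isLt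
    rw [Finset.ssubset_iff_subset_ne]
    refine ⟨hsub, fun heq => ?_⟩
    have hc1 := (h1 ℓ.castSucc).1
    have hc2 := (h1 ℓ.succ).1
    rw [heq] at hc1
    rw [hc1, Fin.coe_castSucc, Fin.val_succ] at hc2
    omega
  · intro ℓ s hcard
    have hC : (∏ j, ((1:ℝ) - p j)) ≠ 0 :=
      Finset.prod_ne_zero_iff.2 fun j _ => ne_of_gt (by linarith [(hp j).2])
    have hℓn : (ℓ : ℕ) ≤ n := by have := ℓ.isLt; omega
    have hmain := mu_marginal hp n le_rfl (ℓ : ℕ) hℓn s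
      (by rw [SS_n]; exact subset_univ s) hcard
    have hden : (∑ t ∈ (univ : Finset (Fin n)).powersetCard (ℓ : ℕ),
        ∏ j, if j ∈ t then p j else 1 - p j) = EE n p n (ℓ : ℕ) * ∏ j, (1 - p j) := by
      rw [EE, SS_n, Finset.sum_mul]
      exact sum_congr rfl fun t _ => prod_ite_eq_mul hp t
    calc ∑ c ∈ (Finset.univ : Finset ((Fin (n + 1)) → Finset (Fin n))).filter
            (fun c => c ℓ = s), mu n p n c
        = (∏ j ∈ s, rr n p j) / EE n p n (ℓ : ℕ) := hmain
      _ = ((∏ j ∈ s, rr n p j) * ∏ j, (1 - p j)) /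
            (EE n p n (ℓ : ℕ) * ∏ j, (1 - p j)) := (mul_div_mul_right _ _ hC).symm
      _ = _ := by rw [← prod_ite_eq_mul hp s, ← hden]
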